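/- Let Λ be an artin algebra, B a finitely generated Λ-module with no nonzero injective direct summands, and h : A → B a morphism that factors through an injective module. Then the socle of A is contained in Ker(h); equivalently, Soc(Ker h) = Soc(A). -/

import Mathlib

universe u

/-- A linear map factors through an injective `Λ`-module. -/
def FactorsThroughInjective (Λ : Type u) [Ring Λ] {A B : Type u}
    [AddCommGroup A] [Module Λ A] [AddCommGroup B] [Module Λ B]
    (h : A →ₗ[Λ] B) : Prop :=
  ∃ (I : Type u) (_ : AddCommGroup I) (_ : Module Λ I),
    Module.Injective Λ I ∧ ∃ (p : A →ₗ[Λ] I) (q : I →ₗ[Λ] B), h = q ∘ₗ p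

/-- `e : M →ₗ[Λ] I` is an injective envelope: `I` is injective, `e` is injective,
and the image of `e` is an essential submodule of `I`. -/
def IsInjectiveEnvelope (Λ : Type u) [Ring Λ] {M I : Type u}
    [AddCommGroup M] [Module Λ M] [AddCommGroup I] [Module Λ I]
    (e : M →ₗ[Λ] I) : Prop :=
  Module.Injective Λ I ∧ Function.Injective e ∧
    ∀ N : Submodule Λ I, N ≠ ⊥ → N ⊓ LinearMap.range e ≠ ⊥

/-- The socle of a module: the sum of all simple (= atomic) submodules. -/
def socle (Λ : Type u) [Ring Λ] (M : Type u) [AddCommGroup M] [Module Λ M] :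
    Submodule Λ M :=
  sSup {N : Submodule Λ M | IsAtom N}

/-- Injectivity transfers along linear equivalences. -/
lemma stmt7_injective_of_linearEquiv {Λ : Type u} [Ring Λ] {M N : Type u}
    [AddCommGroup M] [Module Λ M] [AddCommGroup N] [Module Λ N]
    (e : M ≃ₗ[Λ] N) (hM : Module.Injective Λ M) : Module.Injective Λ N := by
  constructor
  intro X Y _ _ _ _ f hf g
  obtain ⟨F, hF⟩ := hM.out f hf (e.symm.toLinearMap ∘ₗ g)
  exact ⟨e.toLinearMap ∘ₗ F, fun x => by
    simp [LinearMap.comp_apply, hF x]⟩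

/-- A direct summand of an injective module is injective. -/
lemma stmt7_injective_of_isCompl {Λ I : Type u} [Ring Λ] [AddCommGroup I] [Module Λ I]
    (hI : Module.Injective Λ I) (E C : Submodule Λ I) (hc : IsCompl E C) :
    Module.Injective Λ ↥E := by
  constructor
  intro X Y _ _ _ _ f hf g
  obtain ⟨F, hF⟩ := hI.out f hf (E.subtype ∘ₗ g)
  refine ⟨(E.projectionOnto C hc) ∘ₗ F, fun x => ?_⟩
  simp [LinearMap.comp_apply, hF x, Submodule.projectionOnto_apply_left]

/-- if `B` has no nonzero injective direct summands and `h : A → B` factors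
through an injective module, then `Soc(A) ⊆ Ker h`. -/
theorem stmt7
    (k : Type u) [CommRing k] [IsArtinianRing k]
    (Λ : Type u) [Ring Λ] [Algebra k Λ] [Module.Finite k Λ]
    (A B : Type u)
    [AddCommGroup A] [Module Λ A] [Module.Finite Λ A]
    [AddCommGroup B] [Module Λ B] [Module.Finite Λ B]
    (hB : ∀ N : Submodule Λ B, (∃ N' : Submodule Λ B, IsCompl N N') →
      Module.Injective Λ ↥N → N = ⊥)
    (h : A →ₗ[Λ] B)
    (hfact : FactorsThroughInjective Λ h) :
    socle Λ A ≤ LinearMap.ker h := by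
  obtain ⟨I, _, _, hI, p, q, rfl⟩ := hfact
  unfold socle
  rw [sSup_le_iff]
  intro S hS
  by_contra hc
  -- the image of the simple `S` in `B` is nonzero
  have hmapS : Submodule.map (q ∘ₗ p) S ≠ ⊥ := by
    intro hb
    apply hc
    intro x hx
    rw [LinearMap.mem_ker]
    have hx' : (q ∘ₗ p) x ∈ Submodule.map (q ∘ₗ p) S := Submodule.mem_map_of_mem hx
    rw [hb] at hx'
    simpa using hx'
  -- `P`, the image of `S` in `I`, is a simple submodule of `I`
  set P : Submodule Λ I := Submodule.map p S with hPdef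
  have hmapqP : Submodule.map q P = Submodule.map (q ∘ₗ p) S := by
    rw [hPdef, ← Submodule.map_comp]
  have hPne : P ≠ ⊥ := by
    intro hb
    apply hmapS
    rw [← hmapqP, hb, Submodule.map_bot]
  have hPatom : IsAtom P := by
    constructor
    · exact hPne
    · intro N hN
      by_contra hNne
      have h1 : Submodule.comap p N ⊓ S ≠ S := by
        intro heq
        have hle : S ≤ Submodule.comap p N := by
          rw [← heq]; exact inf_le_left
        have : P ≤ N := Submodule.map_le_iff_le_comap.2 hle
        exact absurd this hN.not_ge
      have h2 : Submodule.comap p N ⊓ S = ⊥ :=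
        hS.2 _ (lt_of_le_of_ne inf_le_right h1)
      apply hNne
      rw [eq_bot_iff]
      intro x hxN
      have hxP : x ∈ P := hN.le hxN
      obtain ⟨s, hsS, rfl⟩ := hxP
      have : s ∈ Submodule.comap p N ⊓ S := ⟨hxN, hsS⟩
      rw [h2] at this
      simp only [Submodule.mem_bot] at this
      rw [this]
      simp
  -- Zorn: a maximal essential extension `E` of `P` inside `I`
  set s1 : Set (Submodule Λ I) :=
    {E | P ≤ E ∧ ∀ N : Submodule Λ I, N ≤ E → N ≠ ⊥ → N ⊓ P ≠ ⊥} with hs1def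
  have hPs1 : P ∈ s1 := by
    refine ⟨le_rfl, fun N hNP hN0 => ?_⟩
    rw [inf_eq_left.2 hNP]
    exact hN0
  obtain ⟨E, hPE, hEmax⟩ := zorn_le_nonempty₀ s1 (fun c hcs hchain y hy => by
    refine ⟨sSup c, ⟨le_trans (hcs hy).1 (le_sSup hy), fun N hNle hN0 => ?_⟩,
      fun z hz => le_sSup hz⟩
    obtain ⟨x, hxN, hx0⟩ := (Submodule.ne_bot_iff N).1 hN0
    obtain ⟨E₀, hE₀c, hxE₀⟩ :=
      (Submodule.mem_sSup_of_directed ⟨y, hy⟩ hchain.directedOn).1 (hNle hxN)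
    have hsp1 : Submodule.span Λ {x} ≤ E₀ := by
      rw [Submodule.span_singleton_le_iff_mem]; exact hxE₀
    have hsp0 : Submodule.span Λ {x} ≠ ⊥ := by
      rw [Ne, Submodule.span_singleton_eq_bot]; exact hx0
    have hspP : Submodule.span Λ {x} ⊓ P ≠ ⊥ := (hcs hE₀c).2 _ hsp1 hsp0
    intro hb
    apply hspP
    rw [eq_bot_iff, ← hb]
    refine inf_le_inf_right P ?_
    rw [Submodule.span_singleton_le_iff_mem]; exact hxN) P hPs1
  have hEess : ∀ N : Submodule Λ I, N ≤ E → N ≠ ⊥ → N ⊓ P ≠ ⊥ := hEmax.1.2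
  -- Zorn: a maximal `C` with `C ⊓ E = ⊥`
  set s2 : Set (Submodule Λ I) := {C | C ⊓ E = ⊥} with hs2def
  have hbots2 : (⊥ : Submodule Λ I) ∈ s2 := bot_inf_eq E
  obtain ⟨C, -, hCmax⟩ := zorn_le_nonempty₀ s2 (fun c hcs hchain y hy => by
    refine ⟨sSup c, ?_, fun z hz => le_sSup hz⟩
    rw [Set.mem_setOf_eq, eq_bot_iff]
    rintro x ⟨hx1, hx2⟩
    obtain ⟨C₀, hC₀c, hxC₀⟩ :=
      (Submodule.mem_sSup_of_directed ⟨y, hy⟩ hchain.directedOn).1 hx1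
    have : x ∈ C₀ ⊓ E := ⟨hxC₀, hx2⟩
    rw [hcs hC₀c] at this
    exact this) ⊥ hbots2
  have hCE : C ⊓ E = ⊥ := hCmax.1
  -- `E` injects into `I ⧸ C`; extend the inclusion `E ↪ I` over this injection
  have hj : Function.Injective (C.mkQ ∘ₗ E.subtype) := by
    rw [← LinearMap.ker_eq_bot, eq_bot_iff]
    rintro ⟨x, hxE⟩ hx
    rw [LinearMap.mem_ker, LinearMap.comp_apply] at hx
    have hxC : x ∈ C := by
      simpa [Submodule.Quotient.mk_eq_zero] using hx
    have : x ∈ C ⊓ E := ⟨hxC, hxE⟩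
    rw [hCE] at this
    simp only [Submodule.mem_bot] at this ⊢
    exact Subtype.ext this
  obtain ⟨g', hg'⟩ := hI.out (C.mkQ ∘ₗ E.subtype) hj E.subtype
  have hg'' : ∀ e : I, (he : e ∈ E) → g' (C.mkQ e) = e := fun e he => hg' ⟨e, he⟩
  -- the image `D` of `E` in `I ⧸ C` is essential
  set D : Submodule Λ (I ⧸ C) := Submodule.map C.mkQ E with hDdef
  have hDess : ∀ Nb : Submodule Λ (I ⧸ C), Nb ≠ ⊥ → Nb ⊓ D ≠ ⊥ := by
    intro Nb hNb
    obtain ⟨xb, hxbN, hxb0⟩ := (Submodule.ne_bot_iff Nb).1 hNb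
    obtain ⟨x, rfl⟩ := C.mkQ_surjective xb
    have hxC : x ∉ C := by
      intro hxC
      apply hxb0
      simpa [Submodule.Quotient.mk_eq_zero] using hxC
    have hM : C < Submodule.comap C.mkQ Nb := by
      refine lt_of_le_of_ne (fun c hcC => ?_) (fun heq => hxC ?_)
      · have : C.mkQ c = 0 := by simpa [Submodule.Quotient.mk_eq_zero] using hcC
        simp only [Submodule.mem_comap, this]; exact Nb.zero_mem
      · rw [heq]; exact hxbN
    have hMne : Submodule.comap C.mkQ Nb ⊓ E ≠ ⊥ := by
      intro hbot
      exact absurd (hCmax.2 hbot hM.le) hM.not_ge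
    obtain ⟨z, ⟨hzM, hzE⟩, hz0⟩ := (Submodule.ne_bot_iff _).1 hMne
    refine (Submodule.ne_bot_iff _).2 ⟨C.mkQ z, ⟨hzM, Submodule.mem_map_of_mem hzE⟩, ?_⟩
    intro h0
    have hzC : z ∈ C := by simpa [Submodule.Quotient.mk_eq_zero] using h0
    have : z ∈ C ⊓ E := ⟨hzC, hzE⟩
    rw [hCE] at this
    exact hz0 (by simpa using this)
  -- the extension `g' : I ⧸ C → I` is injective
  have hg'inj : Function.Injective g' := by
    rw [← LinearMap.ker_eq_bot]
    by_contra hker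
    obtain ⟨z, hzmem, hz0⟩ := (Submodule.ne_bot_iff _).1 (hDess _ hker)
    obtain ⟨hzker, hzD⟩ := Submodule.mem_inf.1 hzmem
    obtain ⟨e, heE, rfl⟩ := hzD
    rw [LinearMap.mem_ker, hg'' e heE] at hzker
    apply hz0
    rw [hzker]
    simp
  -- the range of `g'` is an essential extension of `P` containing `E`, so equals `E`
  have hER : E ≤ LinearMap.range g' := fun e he => ⟨C.mkQ e, hg'' e he⟩
  have hRE : LinearMap.range g' = E := by
    have hRs1 : LinearMap.range g' ∈ s1 := by
      refine ⟨le_trans hPE hER, fun N hNR hN0 => ?_⟩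
      have hN' : Submodule.comap g' N ≠ ⊥ := by
        intro hb
        apply hN0
        have hmc : Submodule.map g' (Submodule.comap g' N) = N := by
          rw [Submodule.map_comap_eq, inf_eq_right.2 hNR]
        rw [← hmc, hb, Submodule.map_bot]
      obtain ⟨z, hzmem, hz0⟩ := (Submodule.ne_bot_iff _).1 (hDess _ hN')
      obtain ⟨hzN', hzD⟩ := Submodule.mem_inf.1 hzmem
      obtain ⟨e, heE, rfl⟩ := hzD
      have hgz : g' (C.mkQ e) = e := hg'' e heE
      have heN : e ∈ N := by
        have := hzN'
        rw [Submodule.mem_comap, hgz] at this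
        exact this
      have he0 : e ≠ 0 := by
        intro h0
        apply hz0
        rw [h0]
        simp
      have hNE : N ⊓ E ≠ ⊥ := (Submodule.ne_bot_iff _).2 ⟨e, ⟨heN, heE⟩, he0⟩
      have hNEP := hEess (N ⊓ E) inf_le_right hNE
      intro hb
      apply hNEP
      rw [eq_bot_iff, ← hb]
      exact inf_le_inf_right P inf_le_left
    exact le_antisymm (hEmax.2 hRs1 hER) hER
  -- `E` is a direct summand of `I`, hence injective
  have hcompl : IsCompl E C := by
    constructor
    · rw [disjoint_iff, inf_comm]
      exact hCE
    · rw [codisjoint_iff_le_sup]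
      intro i _
      have he : g' (C.mkQ i) ∈ E := hRE ▸ LinearMap.mem_range_self g' (C.mkQ i)
      refine Submodule.mem_sup.2 ⟨g' (C.mkQ i), he, i - g' (C.mkQ i), ?_, by abel⟩
      have h1 : C.mkQ (g' (C.mkQ i)) = C.mkQ i := by
        apply hg'inj
        rw [hg'' _ he]
      have : C.mkQ (i - g' (C.mkQ i)) = 0 := by
        rw [map_sub, h1, sub_self]
      rwa [Submodule.mkQ_apply, Submodule.Quotient.mk_eq_zero] at this
  have hEinj : Module.Injective Λ ↥E := stmt7_injective_of_isCompl hI E C hcompl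
  -- `q` is injective on `E`
  have hkerqE : LinearMap.ker q ⊓ E = ⊥ := by
    by_contra hne
    have h1 := hEess _ inf_le_right hne
    have h2 : LinearMap.ker q ⊓ P ≠ ⊥ := by
      intro hb
      apply h1
      rw [eq_bot_iff, ← hb]
      exact inf_le_inf_right P inf_le_left
    have h3 : LinearMap.ker q ⊓ P = P := by
      rcases (hPatom.le_iff).1 (inf_le_right : LinearMap.ker q ⊓ P ≤ P) with hb | hp
      · exact absurd hb h2
      · exact hp
    have hPker : P ≤ LinearMap.ker q := by
      rw [← h3]; exact inf_le_left
    apply hmapS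
    rw [← hmapqP, eq_bot_iff]
    rintro x ⟨y, hyP, rfl⟩
    simpa [Submodule.mem_bot] using hPker hyP
  -- the image of `E` in `B` is an injective direct summand, hence zero; contradiction
  set Nq : Submodule Λ B := Submodule.map q E with hNqdef
  have hrestr : ∀ x ∈ E, q x ∈ Nq := fun x hx => Submodule.mem_map_of_mem hx
  have hφbij : Function.Bijective (q.restrict hrestr) := by
    constructor
    · intro a b hab
      have hqab : q (a : I) = q (b : I) := by
        have := congrArg (Subtype.val) hab
        simpa [LinearMap.restrict_apply] using this
      have hmem : ((a : I) - b) ∈ LinearMap.ker q ⊓ E :=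
        Submodule.mem_inf.2
          ⟨by rw [LinearMap.mem_ker, map_sub, hqab, sub_self], E.sub_mem a.2 b.2⟩
      rw [hkerqE] at hmem
      exact Subtype.ext (sub_eq_zero.1 ((Submodule.mem_bot Λ).1 hmem))
    · rintro ⟨x, hx⟩
      obtain ⟨e, heE, he⟩ := hx
      exact ⟨⟨e, heE⟩, Subtype.ext (by simpa [LinearMap.restrict_apply] using he)⟩
  have hNqinj : Module.Injective Λ ↥Nq :=
    stmt7_injective_of_linearEquiv (LinearEquiv.ofBijective _ hφbij) hEinj
  obtain ⟨r, hr⟩ := hNqinj.out Nq.subtype Nq.injective_subtype LinearMap.id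
  have hcomplN : IsCompl Nq (LinearMap.ker r) :=
    LinearMap.isCompl_of_proj (fun x => hr x)
  have hNqbot : Nq = ⊥ := hB Nq ⟨_, hcomplN⟩ hNqinj
  apply hmapS
  rw [eq_bot_iff, ← hNqbot, ← hmapqP]
  exact Submodule.map_mono hPE
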